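/- For every positive integer k, there exists a constant c > 0 such that for all even positive integers n, |Φ_k(n) − (C(n,k) − C(n/2,k))| ≤ c·n·C(⌊n/3⌋, k), where C denotes the binomial coefficient. -/
import Mathlib

open Finset

def Phik (n k : ℕ) : ℕ :=
  ((Finset.Icc 1 n).powerset.filter
    (fun A => A.card = k ∧ Nat.gcd (A.gcd id) n = 1)).card

theorem Phik_asymptotic_even (k : ℕ) (hk : 0 < k) :
    ∃ c : ℝ, 0 < c ∧ ∀ n : ℕ, 0 < n → Even n →
      |(Phik n k : ℝ) - ((n.choose k : ℝ) - ((n / 2).choose k : ℝ))| ≤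
        c * n * ((n / 3).choose k : ℝ) := by
  refine ⟨1, one_pos, fun n hn hev => ?_⟩
  set B : Finset (Finset ℕ) := ((Icc 1 n).powersetCard k).filter
      (fun A => ¬ Nat.gcd (A.gcd id) n = 1) with hBdef
  set E : Finset (Finset ℕ) := ((Icc 1 n).filter (fun x => 2 ∣ x)).powersetCard k with hEdef
  set U : Finset (Finset ℕ) := (Icc 3 n).biUnion
      (fun p => ((Icc 1 n).filter (fun x => p ∣ x)).powersetCard k) with hUdef
  have hdvdcard : ∀ p : ℕ, ((Icc 1 n).filter (fun x => p ∣ x)).card = n / p := by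
    intro p
    have : Icc 1 n = Ioc 0 n := rfl
    rw [this, Nat.Ioc_filter_dvd_card_eq_div]
  -- split
  have hsplit : Phik n k + B.card = n.choose k := by
    have h1 : Phik n k = (((Icc 1 n).powersetCard k).filter
        (fun A => Nat.gcd (A.gcd id) n = 1)).card := by
      unfold Phik
      rw [Finset.powersetCard_eq_filter, Finset.filter_filter]
    rw [h1, hBdef, Finset.card_filter_add_card_filter_not, card_powersetCard,
      Nat.card_Icc]
    simp
  -- E card
  have hEcard : E.card = (n / 2).choose k := by
    rw [hEdef, card_powersetCard, hdvdcard]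
  -- E ⊆ B
  have hEB : E ⊆ B := by
    intro A hA
    rw [hEdef, mem_powersetCard] at hA
    obtain ⟨hsub, hcard⟩ := hA
    rw [hBdef, mem_filter, mem_powersetCard]
    refine ⟨⟨fun x hx => (mem_filter.mp (hsub hx)).1, hcard⟩, ?_⟩
    intro h1
    have h2 : 2 ∣ A.gcd id := Finset.dvd_gcd (fun x hx => (mem_filter.mp (hsub hx)).2)
    have h3 : 2 ∣ Nat.gcd (A.gcd id) n := Nat.dvd_gcd h2 hev.two_dvd
    rw [h1] at h3
    omega
  -- B ⊆ E ∪ U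
  have hBEU : B ⊆ E ∪ U := by
    intro A hA
    rw [hBdef, mem_filter, mem_powersetCard] at hA
    obtain ⟨⟨hsub, hcard⟩, hne⟩ := hA
    set d := Nat.gcd (A.gcd id) n with hd
    have hd0 : d ≠ 0 := by
      intro h0
      have := Nat.eq_zero_of_gcd_eq_zero_right h0
      omega
    have hd2 : 2 ≤ d := by omega
    by_cases h2 : 2 ∣ d
    · -- even case
      apply mem_union_left
      rw [hEdef, mem_powersetCard]
      refine ⟨fun x hx => ?_, hcard⟩
      rw [mem_filter]
      refine ⟨hsub hx, ?_⟩
      exact dvd_trans (dvd_trans h2 (Nat.gcd_dvd_left _ _)) (Finset.gcd_dvd hx)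
    · -- odd prime case
      apply mem_union_right
      set p := d.minFac with hp
      have hpp : p.Prime := Nat.minFac_prime (by omega)
      have hpd : p ∣ d := Nat.minFac_dvd d
      have hp2 : p ≠ 2 := by
        intro h
        rw [h] at hpd
        exact h2 hpd
      have hp3 : 3 ≤ p := by
        have := hpp.two_le
        omega
    -- p ≤ n
      have hpn : p ≤ n := Nat.le_of_dvd hn (dvd_trans hpd (Nat.gcd_dvd_right _ _))
      rw [hUdef, mem_biUnion]
      refine ⟨p, mem_Icc.mpr ⟨hp3, hpn⟩, ?_⟩
      rw [mem_powersetCard]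
      refine ⟨fun x hx => ?_, hcard⟩
      rw [mem_filter]
      exact ⟨hsub hx, dvd_trans (dvd_trans hpd (Nat.gcd_dvd_left _ _)) (Finset.gcd_dvd hx)⟩
  -- U card bound
  have hUcard : U.card ≤ n * (n / 3).choose k := by
    calc U.card ≤ ∑ p ∈ Icc 3 n, (((Icc 1 n).filter (fun x => p ∣ x)).powersetCard k).card :=
          card_biUnion_le
      _ ≤ ∑ p ∈ Icc 3 n, (n / 3).choose k := by
          apply Finset.sum_le_sum
          intro p hp
          rw [card_powersetCard, hdvdcard]
          exact Nat.choose_le_choose k (Nat.div_le_div_left (mem_Icc.mp hp).1 (by omega))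
      _ = (Icc 3 n).card * (n / 3).choose k := by rw [Finset.sum_const, smul_eq_mul]
      _ ≤ n * (n / 3).choose k := by
          apply Nat.mul_le_mul_right
          rw [Nat.card_Icc]
          omega
  have hBle : B.card ≤ (n / 2).choose k + n * (n / 3).choose k := by
    calc B.card ≤ (E ∪ U).card := card_le_card hBEU
      _ ≤ E.card + U.card := card_union_le _ _
      _ ≤ _ := by rw [hEcard]; omega
  have hBge : (n / 2).choose k ≤ B.card := by
    rw [← hEcard]; exact card_le_card hEB
  -- final arithmetic
  have hPhi : (Phik n k : ℝ) = (n.choose k : ℝ) - (B.card : ℝ) := by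
    have := hsplit
    push_cast [← this]
    ring
  rw [hPhi]
  rw [abs_le]
  have h1 : ((n / 2).choose k : ℝ) ≤ (B.card : ℝ) := by exact_mod_cast hBge
  have h2 : (B.card : ℝ) ≤ ((n / 2).choose k : ℝ) + (n : ℝ) * ((n / 3).choose k : ℝ) := by
    exact_mod_cast hBle
  constructor <;> linarith
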